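/- Let ψ_XOR be the 3-qubit state defined by ψ_XOR s = 1/2 if s 2 = s 0 + s 1 (identifying Fin 2 with ZMod 2) and ψ_XOR s = 0 otherwise. In the measurement scenario in which each of the three parties may choose between the Pauli observables Y and Z, the empirical model of ψ_XOR is strongly contextual: no global assignment g : (i : Fin 3) → {Y, Z} → Bool is consistent. -/

import Mathlib

open Complex Finset

/-- A local observable: a pair of vectors forming an orthonormal basis of ℂ². -/
structure Obs where
  eplus : Fin 2 → ℂ
  eminus : Fin 2 → ℂ
  norm_plus : ∑ a : Fin 2, ‖eplus a‖ ^ 2 = 1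
  norm_minus : ∑ a : Fin 2, ‖eminus a‖ ^ 2 = 1
  orth : ∑ a : Fin 2, (starRingEnd ℂ) (eplus a) * eminus a = 0

/-- Probability that context `c` yields joint outcome `o` on state `ψ`. -/
noncomputable def jointProb {n : ℕ} (ψ : (Fin n → Fin 2) → ℂ) (c : Fin n → Obs)
    (o : Fin n → Bool) : ℝ :=
  ‖∑ s : Fin n → Fin 2,
      (∏ i : Fin n,
        (starRingEnd ℂ) ((if o i then (c i).eplus else (c i).eminus) (s i))) * ψ s‖ ^ 2

/-- A global assignment `g` is consistent if in every context of the scenario `M`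
the induced joint outcome is possible. -/
def Consistent {n : ℕ} (ψ : (Fin n → Fin 2) → ℂ) (M : Fin n → Set Obs)
    (g : Fin n → Obs → Bool) : Prop :=
  ∀ c : Fin n → Obs, (∀ i, c i ∈ M i) → jointProb ψ c (fun i => g i (c i)) ≠ 0

def StronglyContextual {n : ℕ} (ψ : (Fin n → Fin 2) → ℂ) (M : Fin n → Set Obs) : Prop :=
  ¬ ∃ g : Fin n → Obs → Bool, Consistent ψ M g

def LogicallyContextual {n : ℕ} (ψ : (Fin n → Fin 2) → ℂ) (M : Fin n → Set Obs) : Prop :=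
  ∃ c : Fin n → Obs, (∀ i, c i ∈ M i) ∧ ∃ o : Fin n → Bool,
    jointProb ψ c o ≠ 0 ∧
    ¬ ∃ g : Fin n → Obs → Bool, Consistent ψ M g ∧ ∀ i, g i (c i) = o i

/-- The Pauli Z observable. -/
noncomputable def pauliZ : Obs where
  eplus := ![1, 0]
  eminus := ![0, 1]
  norm_plus := by simp [Fin.sum_univ_two]
  norm_minus := by simp [Fin.sum_univ_two]
  orth := by simp [Fin.sum_univ_two]

/-- The Pauli Y observable. -/
noncomputable def pauliY : Obs where
  eplus := ![((Real.sqrt 2)⁻¹ : ℝ), ((Real.sqrt 2)⁻¹ : ℝ) * Complex.I]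
  eminus := ![((Real.sqrt 2)⁻¹ : ℝ), -(((Real.sqrt 2)⁻¹ : ℝ) * Complex.I)]
  norm_plus := by
    have h : ‖(((Real.sqrt 2)⁻¹ : ℝ) : ℂ)‖ ^ 2 = 1 / 2 := by
      rw [Complex.norm_real, Real.norm_eq_abs, _root_.sq_abs, inv_pow,
        Real.sq_sqrt (by norm_num : (0:ℝ) ≤ 2)]
      norm_num
    simp [Fin.sum_univ_two, norm_mul, h]
    norm_num [h]
  norm_minus := by
    have h : ‖(((Real.sqrt 2)⁻¹ : ℝ) : ℂ)‖ ^ 2 = 1 / 2 := by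
      rw [Complex.norm_real, Real.norm_eq_abs, _root_.sq_abs, inv_pow,
        Real.sq_sqrt (by norm_num : (0:ℝ) ≤ 2)]
      norm_num
    simp [Fin.sum_univ_two, norm_mul, h]
    norm_num [h]
  orth := by
    have h : ((starRingEnd ℂ) (((Real.sqrt 2)⁻¹ : ℝ) : ℂ)) = (((Real.sqrt 2)⁻¹ : ℝ) : ℂ) :=
      Complex.conj_ofReal _
    simp [Fin.sum_univ_two, map_mul, Complex.conj_I, h]
    linear_combination (((Real.sqrt 2 : ℝ) : ℂ))⁻¹ * (((Real.sqrt 2 : ℝ) : ℂ))⁻¹ * Complex.I_mul_I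

/-- The Pauli X observable. -/
noncomputable def pauliX : Obs where
  eplus := ![((Real.sqrt 2)⁻¹ : ℝ), ((Real.sqrt 2)⁻¹ : ℝ)]
  eminus := ![((Real.sqrt 2)⁻¹ : ℝ), -(((Real.sqrt 2)⁻¹ : ℝ) : ℂ)]
  norm_plus := by
    have h : ‖(((Real.sqrt 2)⁻¹ : ℝ) : ℂ)‖ ^ 2 = 1 / 2 := by
      rw [Complex.norm_real, Real.norm_eq_abs, _root_.sq_abs, inv_pow,
        Real.sq_sqrt (by norm_num : (0:ℝ) ≤ 2)]
      norm_num
    simp [Fin.sum_univ_two, h]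
    norm_num [h]
  norm_minus := by
    have h : ‖(((Real.sqrt 2)⁻¹ : ℝ) : ℂ)‖ ^ 2 = 1 / 2 := by
      rw [Complex.norm_real, Real.norm_eq_abs, _root_.sq_abs, inv_pow,
        Real.sq_sqrt (by norm_num : (0:ℝ) ≤ 2)]
      norm_num
    simp [Fin.sum_univ_two, h]
    norm_num [h]
  orth := by
    have h : ((starRingEnd ℂ) (((Real.sqrt 2)⁻¹ : ℝ) : ℂ)) = (((Real.sqrt 2)⁻¹ : ℝ) : ℂ) :=
      Complex.conj_ofReal _
    simp [Fin.sum_univ_two, h]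

/-- The XOR state: `ψ s = 1/2` when `s 2 = s 0 + s 1` in `ZMod 2`, else `0`. -/
noncomputable def psiXOR : (Fin 3 → Fin 2) → ℂ := fun s =>
  if ((s 2 : ℕ) : ZMod 2) = ((s 0 : ℕ) : ZMod 2) + ((s 1 : ℕ) : ZMod 2)
  then (1 / 2 : ℂ) else 0

/-- The XOR state is strongly contextual for the scenario where each of the three
parties chooses between the Pauli observables Y and Z. -/
def e3 : Fin 2 × Fin 2 × Fin 2 ≃ (Fin 3 → Fin 2) where
  toFun p := ![p.1, p.2.1, p.2.2]
  invFun s := (s 0, s 1, s 2)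
  left_inv := by intro p; simp
  right_inv := by
    intro s; funext i; fin_cases i <;> simp

lemma sum_fin3 (f : (Fin 3 → Fin 2) → ℂ) :
    ∑ s, f s = ∑ a : Fin 2, ∑ b : Fin 2, ∑ c : Fin 2, f ![a,b,c] := by
  rw [← e3.sum_comp f, Fintype.sum_prod_type]
  simp [Fintype.sum_prod_type, e3]

lemma zero_ZZZ_ttf :
    jointProb psiXOR ![pauliZ, pauliZ, pauliZ] ![true, true, false] = 0 := by
  rw [jointProb, sum_fin3]
  simp only [Fin.prod_univ_three, Matrix.cons_val_zero, Matrix.cons_val_one, Matrix.head_cons,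
    Matrix.cons_val_two, Matrix.tail_cons, Fin.sum_univ_two, psiXOR, pauliY, pauliZ,
    if_true, if_false, Bool.false_eq_true]
  simp (config := { decide := true }) only [if_true, if_false, Bool.false_eq_true, ↓reduceIte]
  norm_num [Complex.ext_iff, Complex.mul_re, Complex.mul_im]

lemma zero_ZZZ_tft :
    jointProb psiXOR ![pauliZ, pauliZ, pauliZ] ![true, false, true] = 0 := by
  rw [jointProb, sum_fin3]
  simp only [Fin.prod_univ_three, Matrix.cons_val_zero, Matrix.cons_val_one, Matrix.head_cons,
    Matrix.cons_val_two, Matrix.tail_cons, Fin.sum_univ_two, psiXOR, pauliY, pauliZ,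
    if_true, if_false, Bool.false_eq_true]
  simp (config := { decide := true }) only [if_true, if_false, Bool.false_eq_true, ↓reduceIte]
  norm_num [Complex.ext_iff, Complex.mul_re, Complex.mul_im]

lemma zero_ZZZ_ftt :
    jointProb psiXOR ![pauliZ, pauliZ, pauliZ] ![false, true, true] = 0 := by
  rw [jointProb, sum_fin3]
  simp only [Fin.prod_univ_three, Matrix.cons_val_zero, Matrix.cons_val_one, Matrix.head_cons,
    Matrix.cons_val_two, Matrix.tail_cons, Fin.sum_univ_two, psiXOR, pauliY, pauliZ,
    if_true, if_false, Bool.false_eq_true]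
  simp (config := { decide := true }) only [if_true, if_false, Bool.false_eq_true, ↓reduceIte]
  norm_num [Complex.ext_iff, Complex.mul_re, Complex.mul_im]

lemma zero_ZZZ_fff :
    jointProb psiXOR ![pauliZ, pauliZ, pauliZ] ![false, false, false] = 0 := by
  rw [jointProb, sum_fin3]
  simp only [Fin.prod_univ_three, Matrix.cons_val_zero, Matrix.cons_val_one, Matrix.head_cons,
    Matrix.cons_val_two, Matrix.tail_cons, Fin.sum_univ_two, psiXOR, pauliY, pauliZ,
    if_true, if_false, Bool.false_eq_true]
  simp (config := { decide := true }) only [if_true, if_false, Bool.false_eq_true, ↓reduceIte]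
  norm_num [Complex.ext_iff, Complex.mul_re, Complex.mul_im]

lemma zero_YYZ_ttt :
    jointProb psiXOR ![pauliY, pauliY, pauliZ] ![true, true, true] = 0 := by
  rw [jointProb, sum_fin3]
  simp only [Fin.prod_univ_three, Matrix.cons_val_zero, Matrix.cons_val_one, Matrix.head_cons,
    Matrix.cons_val_two, Matrix.tail_cons, Fin.sum_univ_two, psiXOR, pauliY, pauliZ,
    if_true, if_false, Bool.false_eq_true]
  simp (config := { decide := true }) only [if_true, if_false, Bool.false_eq_true, ↓reduceIte]
  norm_num [Complex.ext_iff, Complex.mul_re, Complex.mul_im]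

lemma zero_YYZ_tff :
    jointProb psiXOR ![pauliY, pauliY, pauliZ] ![true, false, false] = 0 := by
  rw [jointProb, sum_fin3]
  simp only [Fin.prod_univ_three, Matrix.cons_val_zero, Matrix.cons_val_one, Matrix.head_cons,
    Matrix.cons_val_two, Matrix.tail_cons, Fin.sum_univ_two, psiXOR, pauliY, pauliZ,
    if_true, if_false, Bool.false_eq_true]
  simp (config := { decide := true }) only [if_true, if_false, Bool.false_eq_true, ↓reduceIte]
  norm_num [Complex.ext_iff, Complex.mul_re, Complex.mul_im]

lemma zero_YYZ_ftf :
    jointProb psiXOR ![pauliY, pauliY, pauliZ] ![false, true, false] = 0 := by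
  rw [jointProb, sum_fin3]
  simp only [Fin.prod_univ_three, Matrix.cons_val_zero, Matrix.cons_val_one, Matrix.head_cons,
    Matrix.cons_val_two, Matrix.tail_cons, Fin.sum_univ_two, psiXOR, pauliY, pauliZ,
    if_true, if_false, Bool.false_eq_true]
  simp (config := { decide := true }) only [if_true, if_false, Bool.false_eq_true, ↓reduceIte]
  norm_num [Complex.ext_iff, Complex.mul_re, Complex.mul_im]

lemma zero_YYZ_fft :
    jointProb psiXOR ![pauliY, pauliY, pauliZ] ![false, false, true] = 0 := by
  rw [jointProb, sum_fin3]
  simp only [Fin.prod_univ_three, Matrix.cons_val_zero, Matrix.cons_val_one, Matrix.head_cons,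
    Matrix.cons_val_two, Matrix.tail_cons, Fin.sum_univ_two, psiXOR, pauliY, pauliZ,
    if_true, if_false, Bool.false_eq_true]
  simp (config := { decide := true }) only [if_true, if_false, Bool.false_eq_true, ↓reduceIte]
  norm_num [Complex.ext_iff, Complex.mul_re, Complex.mul_im]

lemma zero_YZY_ttt :
    jointProb psiXOR ![pauliY, pauliZ, pauliY] ![true, true, true] = 0 := by
  rw [jointProb, sum_fin3]
  simp only [Fin.prod_univ_three, Matrix.cons_val_zero, Matrix.cons_val_one, Matrix.head_cons,
    Matrix.cons_val_two, Matrix.tail_cons, Fin.sum_univ_two, psiXOR, pauliY, pauliZ,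
    if_true, if_false, Bool.false_eq_true]
  simp (config := { decide := true }) only [if_true, if_false, Bool.false_eq_true, ↓reduceIte]
  norm_num [Complex.ext_iff, Complex.mul_re, Complex.mul_im]

lemma zero_YZY_tff :
    jointProb psiXOR ![pauliY, pauliZ, pauliY] ![true, false, false] = 0 := by
  rw [jointProb, sum_fin3]
  simp only [Fin.prod_univ_three, Matrix.cons_val_zero, Matrix.cons_val_one, Matrix.head_cons,
    Matrix.cons_val_two, Matrix.tail_cons, Fin.sum_univ_two, psiXOR, pauliY, pauliZ,
    if_true, if_false, Bool.false_eq_true]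
  simp (config := { decide := true }) only [if_true, if_false, Bool.false_eq_true, ↓reduceIte]
  norm_num [Complex.ext_iff, Complex.mul_re, Complex.mul_im]

lemma zero_YZY_ftf :
    jointProb psiXOR ![pauliY, pauliZ, pauliY] ![false, true, false] = 0 := by
  rw [jointProb, sum_fin3]
  simp only [Fin.prod_univ_three, Matrix.cons_val_zero, Matrix.cons_val_one, Matrix.head_cons,
    Matrix.cons_val_two, Matrix.tail_cons, Fin.sum_univ_two, psiXOR, pauliY, pauliZ,
    if_true, if_false, Bool.false_eq_true]
  simp (config := { decide := true }) only [if_true, if_false, Bool.false_eq_true, ↓reduceIte]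
  norm_num [Complex.ext_iff, Complex.mul_re, Complex.mul_im]

lemma zero_YZY_fft :
    jointProb psiXOR ![pauliY, pauliZ, pauliY] ![false, false, true] = 0 := by
  rw [jointProb, sum_fin3]
  simp only [Fin.prod_univ_three, Matrix.cons_val_zero, Matrix.cons_val_one, Matrix.head_cons,
    Matrix.cons_val_two, Matrix.tail_cons, Fin.sum_univ_two, psiXOR, pauliY, pauliZ,
    if_true, if_false, Bool.false_eq_true]
  simp (config := { decide := true }) only [if_true, if_false, Bool.false_eq_true, ↓reduceIte]
  norm_num [Complex.ext_iff, Complex.mul_re, Complex.mul_im]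

lemma zero_ZYY_ttt :
    jointProb psiXOR ![pauliZ, pauliY, pauliY] ![true, true, true] = 0 := by
  rw [jointProb, sum_fin3]
  simp only [Fin.prod_univ_three, Matrix.cons_val_zero, Matrix.cons_val_one, Matrix.head_cons,
    Matrix.cons_val_two, Matrix.tail_cons, Fin.sum_univ_two, psiXOR, pauliY, pauliZ,
    if_true, if_false, Bool.false_eq_true]
  simp (config := { decide := true }) only [if_true, if_false, Bool.false_eq_true, ↓reduceIte]
  norm_num [Complex.ext_iff, Complex.mul_re, Complex.mul_im]

lemma zero_ZYY_tff :
    jointProb psiXOR ![pauliZ, pauliY, pauliY] ![true, false, false] = 0 := by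
  rw [jointProb, sum_fin3]
  simp only [Fin.prod_univ_three, Matrix.cons_val_zero, Matrix.cons_val_one, Matrix.head_cons,
    Matrix.cons_val_two, Matrix.tail_cons, Fin.sum_univ_two, psiXOR, pauliY, pauliZ,
    if_true, if_false, Bool.false_eq_true]
  simp (config := { decide := true }) only [if_true, if_false, Bool.false_eq_true, ↓reduceIte]
  norm_num [Complex.ext_iff, Complex.mul_re, Complex.mul_im]

lemma zero_ZYY_ftf :
    jointProb psiXOR ![pauliZ, pauliY, pauliY] ![false, true, false] = 0 := by
  rw [jointProb, sum_fin3]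
  simp only [Fin.prod_univ_three, Matrix.cons_val_zero, Matrix.cons_val_one, Matrix.head_cons,
    Matrix.cons_val_two, Matrix.tail_cons, Fin.sum_univ_two, psiXOR, pauliY, pauliZ,
    if_true, if_false, Bool.false_eq_true]
  simp (config := { decide := true }) only [if_true, if_false, Bool.false_eq_true, ↓reduceIte]
  norm_num [Complex.ext_iff, Complex.mul_re, Complex.mul_im]

lemma zero_ZYY_fft :
    jointProb psiXOR ![pauliZ, pauliY, pauliY] ![false, false, true] = 0 := by
  rw [jointProb, sum_fin3]
  simp only [Fin.prod_univ_three, Matrix.cons_val_zero, Matrix.cons_val_one, Matrix.head_cons,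
    Matrix.cons_val_two, Matrix.tail_cons, Fin.sum_univ_two, psiXOR, pauliY, pauliZ,
    if_true, if_false, Bool.false_eq_true]
  simp (config := { decide := true }) only [if_true, if_false, Bool.false_eq_true, ↓reduceIte]
  norm_num [Complex.ext_iff, Complex.mul_re, Complex.mul_im]
theorem psiXOR_stronglyContextual :
    StronglyContextual psiXOR (fun _ : Fin 3 => ({pauliY, pauliZ} : Set Obs)) := by
  rintro ⟨g, hg⟩
  obtain ⟨y0, y1, y2, z0, z1, z2, hy0, hy1, hy2, hz0, hz1, hz2⟩ :
      ∃ y0 y1 y2 z0 z1 z2 : Bool, g 0 pauliY = y0 ∧ g 1 pauliY = y1 ∧ g 2 pauliY = y2 ∧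
        g 0 pauliZ = z0 ∧ g 1 pauliZ = z1 ∧ g 2 pauliZ = z2 :=
    ⟨_, _, _, _, _, _, rfl, rfl, rfl, rfl, rfl, rfl⟩
  have mem : ∀ c : Fin 3 → Obs, (∀ i, c i = pauliY ∨ c i = pauliZ) →
      (∀ i, c i ∈ ({pauliY, pauliZ} : Set Obs)) := by
    intro c h i; rcases h i with h' | h' <;> simp [h']
  have h1 : jointProb psiXOR ![pauliZ, pauliZ, pauliZ] ![z0, z1, z2] ≠ 0 := by
    have := hg ![pauliZ, pauliZ, pauliZ] (mem _ (by intro i; fin_cases i <;> simp))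
    have e : (fun i => g i (![pauliZ, pauliZ, pauliZ] i)) = ![z0, z1, z2] := by
      funext i; fin_cases i <;> simp [hz0, hz1, hz2]
    rwa [e] at this
  have h2 : jointProb psiXOR ![pauliY, pauliY, pauliZ] ![y0, y1, z2] ≠ 0 := by
    have := hg ![pauliY, pauliY, pauliZ] (mem _ (by intro i; fin_cases i <;> simp))
    have e : (fun i => g i (![pauliY, pauliY, pauliZ] i)) = ![y0, y1, z2] := by
      funext i; fin_cases i <;> simp [hy0, hy1, hz2]
    rwa [e] at this
  have h3 : jointProb psiXOR ![pauliY, pauliZ, pauliY] ![y0, z1, y2] ≠ 0 := by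
    have := hg ![pauliY, pauliZ, pauliY] (mem _ (by intro i; fin_cases i <;> simp))
    have e : (fun i => g i (![pauliY, pauliZ, pauliY] i)) = ![y0, z1, y2] := by
      funext i; fin_cases i <;> simp [hy0, hz1, hy2]
    rwa [e] at this
  have h4 : jointProb psiXOR ![pauliZ, pauliY, pauliY] ![z0, y1, y2] ≠ 0 := by
    have := hg ![pauliZ, pauliY, pauliY] (mem _ (by intro i; fin_cases i <;> simp))
    have e : (fun i => g i (![pauliZ, pauliY, pauliY] i)) = ![z0, y1, y2] := by
      funext i; fin_cases i <;> simp [hz0, hy1, hy2]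
    rwa [e] at this
  clear hg hy0 hy1 hy2 hz0 hz1 hz2
  cases y0 <;> cases y1 <;> cases y2 <;> cases z0 <;> cases z1 <;> cases z2 <;>
    simp only [zero_ZZZ_ttf, zero_ZZZ_tft, zero_ZZZ_ftt, zero_ZZZ_fff, zero_YYZ_ttt, zero_YYZ_tff, zero_YYZ_ftf, zero_YYZ_fft, zero_YZY_ttt, zero_YZY_tff, zero_YZY_ftf, zero_YZY_fft, zero_ZYY_ttt, zero_ZYY_tff, zero_ZYY_ftf, zero_ZYY_fft, ne_eq, not_true_eq_false] at h1 h2 h3 h4
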